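/- For every z ∈ ℂ⁷, the scalar potential of the Mz² model satisfies V(z) > 0; equivalently, the equations ∂W/∂z_i(z) = 0 for i = 1,…,7 (in particular λ(z₄z₅ − m²) = 0, μz₄ = 0, νz₅ = 0) have no common solution, so the model has no supersymmetric vacuum. The same holds for the σz³ model. -/

import Mathlib

open Complex Filter Topology

lemma keyD_aux (lam mu nu m a b : ℝ) (f : ℂ → ℂ) (hf : Differentiable ℂ f) (z : Fin 7 → ℂ)
    (W : (Fin 7 → ℂ) → ℂ)
    (hW : W = fun z => (lam : ℂ) * z 0 * (z 3 * z 4 - (m : ℂ) ^ 2) +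
      (mu : ℂ) * z 1 * z 3 + (nu : ℂ) * z 2 * z 4 + (a : ℂ) * (z 4) ^ 2 * z 5 +
      (b : ℂ) * z 3 * z 5 * z 6 + f (z 6)) :
    fderiv ℂ W z (Pi.single 0 1) = (lam : ℂ) * (z 3 * z 4 - (m:ℂ)^2) ∧
    fderiv ℂ W z (Pi.single 1 1) = (mu : ℂ) * z 3 ∧
    fderiv ℂ W z (Pi.single 2 1) = (nu : ℂ) * z 4 := by
  set p : Fin 7 → ((Fin 7 → ℂ) →L[ℂ] ℂ) := fun j => ContinuousLinearMap.proj j with hp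
  have hj : ∀ j : Fin 7, HasFDerivAt (fun z : Fin 7 → ℂ => z j) (p j) z :=
    fun j => (p j).hasFDerivAt
  have H := (((((((hj 0).const_mul (lam:ℂ)).mul (((hj 3).mul (hj 4)).sub_const ((m:ℂ)^2))).add
      (((hj 1).const_mul (mu:ℂ)).mul (hj 3))).add
      (((hj 2).const_mul (nu:ℂ)).mul (hj 4))).add
      ((((hj 4).mul (hj 4)).const_mul (a:ℂ)).mul (hj 5))).add
      ((((hj 3).const_mul (b:ℂ)).mul (hj 5)).mul (hj 6))).add
      (((hf (z 6)).hasFDerivAt).comp z (hj 6))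
  have hWeq : W = (fun x : Fin 7 → ℂ =>
      (lam:ℂ) * x 0 * (x 3 * x 4 - (m:ℂ) ^ 2) + (mu:ℂ) * x 1 * x 3 + (nu:ℂ) * x 2 * x 4 +
        (a:ℂ) * (x 4 * x 4) * x 5 + (b:ℂ) * x 3 * x 5 * x 6 +
        (f ∘ fun z : Fin 7 → ℂ => z 6) x) := by
    rw [hW]
    funext x
    simp only [Function.comp]
    ring
  rw [hWeq, (show HasFDerivAt (fun x : Fin 7 → ℂ =>
      (lam:ℂ) * x 0 * (x 3 * x 4 - (m:ℂ) ^ 2) + (mu:ℂ) * x 1 * x 3 + (nu:ℂ) * x 2 * x 4 +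
        (a:ℂ) * (x 4 * x 4) * x 5 + (b:ℂ) * x 3 * x 5 * x 6 +
        (f ∘ fun z : Fin 7 → ℂ => z 6) x) _ z from H).fderiv]
  refine ⟨?_, ?_, ?_⟩ <;>
  · simp [hp, Pi.single_apply]
    try ring

lemma model_aux (lam mu nu m a b : ℝ)
    (hlam : 0 < lam) (hmu : 0 < mu) (hnu : 0 < nu) (hm : 0 < m)
    (f : ℂ → ℂ) (hf : Differentiable ℂ f)
    (W : (Fin 7 → ℂ) → ℂ)
    (hW : W = fun z => (lam : ℂ) * z 0 * (z 3 * z 4 - (m : ℂ) ^ 2) +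
      (mu : ℂ) * z 1 * z 3 + (nu : ℂ) * z 2 * z 4 + (a : ℂ) * (z 4) ^ 2 * z 5 +
      (b : ℂ) * z 3 * z 5 * z 6 + f (z 6))
    (V : (Fin 7 → ℂ) → ℝ)
    (hV : ∀ z, V z = ∑ i, ‖fderiv ℂ W z (Pi.single i 1)‖ ^ 2) :
    (∀ z, 0 < V z) ∧ ¬ ∃ z : Fin 7 → ℂ, ∀ i, fderiv ℂ W z (Pi.single i 1) = 0 := by
  have key : ∀ z : Fin 7 → ℂ, ∃ i : Fin 7, fderiv ℂ W z (Pi.single i 1) ≠ 0 := by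
    intro z
    obtain ⟨h0, h1, h2⟩ := keyD_aux lam mu nu m a b f hf z W hW
    by_cases h3 : z 3 = 0
    · by_cases h4 : z 4 = 0
      · refine ⟨0, ?_⟩
        rw [h0, h3, h4]
        simp only [mul_zero, zero_mul, zero_sub, mul_neg, neg_ne_zero]
        exact mul_ne_zero (by exact_mod_cast hlam.ne')
          (pow_ne_zero 2 (by exact_mod_cast hm.ne'))
      · exact ⟨2, by rw [h2]; exact mul_ne_zero (by exact_mod_cast hnu.ne') h4⟩
    · exact ⟨1, by rw [h1]; exact mul_ne_zero (by exact_mod_cast hmu.ne') h3⟩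
  constructor
  · intro z
    obtain ⟨i, hi⟩ := key z
    rw [hV z]
    refine Finset.sum_pos' (fun j _ => by positivity) ⟨i, Finset.mem_univ i, ?_⟩
    exact pow_pos (norm_pos_iff.mpr hi) 2
  · rintro ⟨z, hz⟩
    obtain ⟨i, hi⟩ := key z
    exact hi (hz i)

/-- The `Mz²` model: seven chiral fields with superpotential
`W = λ z₁(z₄z₅ − m²) + μ z₂z₄ + ν z₃z₅ + a z₅²z₆ + b z₄z₆z₇ + M z₇²`, positive real
parameters, `V(z) = Σᵢ |∂W/∂z_i|²`. For every `z ∈ ℂ⁷`, `V(z) > 0`; equivalently the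
equations `∂W/∂z_i = 0`, `i = 1,…,7`, have no common solution: no SUSY vacuum.
The same holds for the `σz³` model, where `M z₇²` is replaced by `σ z₇³`. -/
theorem seven_field_models_no_susy_vacuum
    (lam mu nu m a b M sig : ℝ)
    (hlam : 0 < lam) (hmu : 0 < mu) (hnu : 0 < nu) (hm : 0 < m)
    (ha : 0 < a) (hb : 0 < b) (hM : 0 < M) (hsig : 0 < sig)
    (W1 : (Fin 7 → ℂ) → ℂ)
    (hW1 : ∀ z, W1 z = (lam : ℂ) * z 0 * (z 3 * z 4 - (m : ℂ) ^ 2) +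
      (mu : ℂ) * z 1 * z 3 + (nu : ℂ) * z 2 * z 4 + (a : ℂ) * (z 4) ^ 2 * z 5 +
      (b : ℂ) * z 3 * z 5 * z 6 + (M : ℂ) * (z 6) ^ 2)
    (V1 : (Fin 7 → ℂ) → ℝ)
    (hV1 : ∀ z, V1 z = ∑ i, ‖fderiv ℂ W1 z (Pi.single i 1)‖ ^ 2)
    (W2 : (Fin 7 → ℂ) → ℂ)
    (hW2 : ∀ z, W2 z = (lam : ℂ) * z 0 * (z 3 * z 4 - (m : ℂ) ^ 2) +
      (mu : ℂ) * z 1 * z 3 + (nu : ℂ) * z 2 * z 4 + (a : ℂ) * (z 4) ^ 2 * z 5 +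
      (b : ℂ) * z 3 * z 5 * z 6 + (sig : ℂ) * (z 6) ^ 3)
    (V2 : (Fin 7 → ℂ) → ℝ)
    (hV2 : ∀ z, V2 z = ∑ i, ‖fderiv ℂ W2 z (Pi.single i 1)‖ ^ 2) :
    ((∀ z, 0 < V1 z) ∧ ¬ ∃ z : Fin 7 → ℂ, ∀ i, fderiv ℂ W1 z (Pi.single i 1) = 0) ∧
    ((∀ z, 0 < V2 z) ∧ ¬ ∃ z : Fin 7 → ℂ, ∀ i, fderiv ℂ W2 z (Pi.single i 1) = 0) := by
  constructor
  · exact model_aux lam mu nu m a b hlam hmu hnu hm (fun w => (M:ℂ) * w ^ 2)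
      (by fun_prop) W1 (funext hW1) V1 hV1
  · exact model_aux lam mu nu m a b hlam hmu hnu hm (fun w => (sig:ℂ) * w ^ 3)
      (by fun_prop) W2 (funext hW2) V2 hV2
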